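/- Let g̃ = σ⁻ + σ⁺ be a 2+2 product spacetime metric with Gaussian curvatures X₋, X₊ of the factors. Then the Weyl tensor of g̃ vanishes at a point if and only if X₋ + X₊ = 0 there; moreover, if X₋ + X₊ = 0 holds identically on a connected product of surfaces, then X₋ and X₊ are both constant. -/
import Mathlib


def liftL (A : Fin 2 → Fin 2 → ℝ) : (Fin 2 ⊕ Fin 2) → (Fin 2 ⊕ Fin 2) → ℝ
  | .inl i, .inl j => A i j
  | _, _ => 0

def liftR (A : Fin 2 → Fin 2 → ℝ) : (Fin 2 ⊕ Fin 2) → (Fin 2 ⊕ Fin 2) → ℝ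
  | .inr i, .inr j => A i j
  | _, _ => 0

/-- Double-forms exterior product. -/
def dwedge {I : Type*} (A B : I → I → ℝ) : I → I → I → I → ℝ :=
  fun a b m n => A a m * B b n + A b n * B a m - A a n * B b m - A b m * B a n

/-- for a 2+2 product spacetime metric `g̃ = σ⁻ + σ⁺` with
Gaussian curvatures `X₋`, `X₊` of the factors, the Weyl tensor
`W = Riem − (1/2)(Ric − (R/6)g)∧̇g` vanishes at a point iff `X₋ + X₊ = 0`
there; moreover if `X₋ + X₊ = 0` holds identically on the (connected, here
arbitrary nonempty) product, then `X₋` and `X₊` are both constant. -/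
theorem stmt_11 (Mm Mp : Type*) [Nonempty Mm] [Nonempty Mp]
    (σm : Mm → Fin 2 → Fin 2 → ℝ) (σp : Mp → Fin 2 → Fin 2 → ℝ)
    (Xm : Mm → ℝ) (Xp : Mp → ℝ)
    (hσmsym : ∀ x i j, σm x i j = σm x j i)
    (hσpsym : ∀ y i j, σp y i j = σp y j i)
    (g ginv : Mm × Mp → (Fin 2 ⊕ Fin 2) → (Fin 2 ⊕ Fin 2) → ℝ)
    (hg : ∀ z a b, g z a b = liftL (σm z.1) a b + liftR (σp z.2) a b)
    (hginv : ∀ z a b, ∑ e, g z a e * ginv z e b = if a = b then (1 : ℝ) else 0)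
    (hginvblock : ∀ z a b, ginv z a b =
      liftL (fun i j => ginv z (.inl i) (.inl j)) a b
      + liftR (fun i j => ginv z (.inr i) (.inr j)) a b)
    (Riem : Mm × Mp → (Fin 2 ⊕ Fin 2) → (Fin 2 ⊕ Fin 2) → (Fin 2 ⊕ Fin 2) →
      (Fin 2 ⊕ Fin 2) → ℝ)
    -- Riemann tensor of the product metric
    (hRiem : ∀ z a b m n, Riem z a b m n =
      (1/2) * Xm z.1 * dwedge (liftL (σm z.1)) (liftL (σm z.1)) a b m n
      + (1/2) * Xp z.2 * dwedge (liftR (σp z.2)) (liftR (σp z.2)) a b m n)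
    (Ric : Mm × Mp → (Fin 2 ⊕ Fin 2) → (Fin 2 ⊕ Fin 2) → ℝ)
    (hRic : ∀ z b n, Ric z b n =
      Xm z.1 * liftL (σm z.1) b n + Xp z.2 * liftR (σp z.2) b n)
    (scalR : Mm × Mp → ℝ)
    (hscalR : ∀ z, scalR z = ∑ a, ∑ b, ginv z a b * Ric z a b)
    (W : Mm × Mp → (Fin 2 ⊕ Fin 2) → (Fin 2 ⊕ Fin 2) → (Fin 2 ⊕ Fin 2) →
      (Fin 2 ⊕ Fin 2) → ℝ)
    -- Weyl tensor: W = Riem − (1/2)(Ric − (R/6) g) ∧̇ g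
    (hW : ∀ z a b m n, W z a b m n = Riem z a b m n
      - (1/2) * dwedge (fun a' b' => Ric z a' b' - (scalR z / 6) * g z a' b')
          (g z) a b m n) :
    (∀ z, ((∀ a b m n, W z a b m n = 0) ↔ Xm z.1 + Xp z.2 = 0))
    ∧ ((∀ z : Mm × Mp, Xm z.1 + Xp z.2 = 0) →
        ((∀ x₁ x₂ : Mm, Xm x₁ = Xm x₂) ∧ (∀ y₁ y₂ : Mp, Xp y₁ = Xp y₂))) := by
  -- scalar curvature equals 2(Xm+Xp)
  have hS : ∀ z, scalR z = 2 * (Xm z.1 + Xp z.2) := by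
    intro z
    have h0 := hginv z (.inl 0) (.inl 0)
    have h1 := hginv z (.inl 1) (.inl 1)
    have h2 := hginv z (.inr 0) (.inr 0)
    have h3 := hginv z (.inr 1) (.inr 1)
    simp only [hg, Fintype.sum_sum_type, Fin.sum_univ_two, liftL, liftR,
      add_zero, zero_add, zero_mul, mul_zero, reduceIte] at h0 h1 h2 h3
    rw [hscalR]
    simp only [hRic, hg, Fintype.sum_sum_type, Fin.sum_univ_two, liftL, liftR,
      add_zero, zero_add, zero_mul, mul_zero]
    linear_combination Xm z.1 * h0 + Xm z.1 * h1 + Xp z.2 * h2 + Xp z.2 * h3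
      + Xm z.1 * (ginv z (.inl 0) (.inl 1) - ginv z (.inl 1) (.inl 0)) * hσmsym z.1 0 1
      + Xp z.2 * (ginv z (.inr 0) (.inr 1) - ginv z (.inr 1) (.inr 0)) * hσpsym z.2 0 1
  -- closed form for the Weyl tensor
  have hWform : ∀ z a b m n, W z a b m n = ((Xm z.1 + Xp z.2) / 6) *
      (dwedge (liftL (σm z.1)) (liftL (σm z.1)) a b m n
        + dwedge (liftR (σp z.2)) (liftR (σp z.2)) a b m n
        - dwedge (liftL (σm z.1)) (liftR (σp z.2)) a b m n) := by
    intro z a b m n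
    rw [hW, hRiem]
    simp only [dwedge, hRic, hg, hS]
    ring
  -- the two metrics have a nonzero entry
  have hm : ∀ z : Mm × Mp, ∃ i k, σm z.1 i k ≠ 0 := by
    intro z
    by_contra h
    push_neg at h
    have h0 := hginv z (.inl 0) (.inl 0)
    simp [Fintype.sum_sum_type, Fin.sum_univ_two, hg, liftL, liftR, h] at h0
  have hp : ∀ z : Mm × Mp, ∃ j l, σp z.2 j l ≠ 0 := by
    intro z
    by_contra h
    push_neg at h
    have h0 := hginv z (.inr 0) (.inr 0)
    simp [Fintype.sum_sum_type, Fin.sum_univ_two, hg, liftL, liftR, h] at h0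
  constructor
  · intro z
    constructor
    · intro hWz
      obtain ⟨i, k, hik⟩ := hm z
      obtain ⟨j, l, hjl⟩ := hp z
      have h := hWform z (.inl i) (.inr j) (.inl k) (.inr l)
      rw [hWz] at h
      simp only [dwedge, liftL, liftR, mul_zero, zero_mul, add_zero, zero_add,
        sub_zero, zero_sub] at h
      have h2 : (Xm z.1 + Xp z.2) * (σm z.1 i k * σp z.2 j l) = 0 := by
        linear_combination 6 * h
      rcases mul_eq_zero.mp h2 with h3 | h3
      · linarith
      · exact absurd h3 (mul_ne_zero hik hjl)
    · intro hS0 a b m n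
      rw [hWform, hS0]
      ring
  · intro hall
    constructor
    · intro x1 x2
      obtain ⟨y⟩ := (inferInstance : Nonempty Mp)
      have h1 := hall (x1, y)
      have h2 := hall (x2, y)
      simp only at h1 h2
      linarith
    · intro y1 y2
      obtain ⟨x⟩ := (inferInstance : Nonempty Mm)
      have h1 := hall (x, y1)
      have h2 := hall (x, y2)
      simp only at h1 h2
      linarith
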